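/- Let f(x,·) satisfy the μ-PL condition ½‖∇ᵧf(x,y)‖² ≥ μ(Φ(x) - f(x,y)) where Φ(x) = max_y f(x,y), and suppose f(x,·) has L₂-Lipschitz gradient in y. Then for 0 < γ ≤ 1/(2L₂) and y⁺ = y + γ d (ascent step with direction d), Φ(x) - f(x,y⁺) ≤ (1 - μγ/2)(Φ(x) - f(x,y)) - (γ/4)‖∇ᵧf(x,y)‖² + (γ/2)‖∇ᵧf(x,y) - d‖² - (γ/4)‖d‖². -/

import Mathlib

open InnerProductSpace intervalIntegral

lemma descent_aux {F : Type*} [NormedAddCommGroup F] [InnerProductSpace ℝ F] [CompleteSpace F]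
    (f : F → ℝ) (g : F → F) (L : ℝ) (hL : 0 ≤ L)
    (hg : ∀ y, HasGradientAt f (g y) y)
    (hlip : ∀ y₁ y₂, ‖g y₁ - g y₂‖ ≤ L * ‖y₁ - y₂‖)
    (y v : F) :
    |f (y + v) - f y - inner ℝ (g y) v| ≤ L / 2 * ‖v‖ ^ 2 := by
  set ψ : ℝ → ℝ := fun t => f (y + t • v) - inner ℝ (g y) v * t with hψ
  have hderiv : ∀ t : ℝ, HasDerivAt ψ (inner ℝ (g (y + t • v)) v - inner ℝ (g y) v) t := by
    intro t
    have h1 : HasDerivAt (fun t : ℝ => y + t • v) v t := by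
      simpa using ((hasDerivAt_id t).smul_const v).const_add y
    have h2 : HasFDerivAt f (toDual ℝ F (g (y + t • v))) (y + t • v) := hg _
    have h3 : HasDerivAt (fun t : ℝ => f (y + t • v)) (inner ℝ (g (y + t • v)) v) t := by
      have h4 := h2.comp_hasDerivAt t h1; simp at h4; exact h4
    have h5 := h3.sub ((hasDerivAt_id t).const_mul (inner ℝ (g y) v : ℝ)); simp only [id, mul_one] at h5; exact h5
  have hcont : Continuous g := by
    have : LipschitzWith ⟨L, hL⟩ g := LipschitzWith.of_dist_le_mul (by
      intro a b
      rw [dist_eq_norm, dist_eq_norm]; exact hlip a b)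
    exact this.continuous
  have hcont2 : Continuous fun t : ℝ => (inner ℝ (g (y + t • v)) v : ℝ) - inner ℝ (g y) v := by
    have : Continuous fun t : ℝ => g (y + t • v) :=
      hcont.comp (by continuity)
    exact ((continuous_inner.comp (this.prodMk continuous_const)).sub continuous_const)
  have hint : ψ 1 - ψ 0 = ∫ t in (0:ℝ)..1, ((inner ℝ (g (y + t • v)) v : ℝ) - inner ℝ (g y) v) := by
    exact (intervalIntegral.integral_eq_sub_of_hasDerivAt (fun t _ => hderiv t)
      (hcont2.intervalIntegrable 0 1)).symm
  have hbound : ∀ t ∈ Set.Icc (0:ℝ) 1,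
      ‖(inner ℝ (g (y + t • v)) v : ℝ) - inner ℝ (g y) v‖ ≤ L * t * ‖v‖ ^ 2 := by
    intro t ht
    have : (inner ℝ (g (y + t • v)) v : ℝ) - inner ℝ (g y) v = inner ℝ (g (y + t • v) - g y) v := by
      rw [inner_sub_left]
    rw [this]
    calc ‖(inner ℝ (g (y + t • v) - g y) v : ℝ)‖ ≤ ‖g (y + t • v) - g y‖ * ‖v‖ :=
          norm_inner_le_norm _ _
      _ ≤ (L * ‖t • v‖) * ‖v‖ := by
          gcongr
          simpa using hlip (y + t • v) y
      _ = L * t * ‖v‖ ^ 2 := by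
          rw [norm_smul, Real.norm_eq_abs, abs_of_nonneg ht.1]; ring
  have key : ‖ψ 1 - ψ 0‖ ≤ L / 2 * ‖v‖ ^ 2 := by
    rw [hint]
    have hbd : ∀ᵐ t ∂MeasureTheory.volume.restrict (Set.uIoc (0:ℝ) 1),
        ‖(inner ℝ (g (y + t • v)) v : ℝ) - inner ℝ (g y) v‖ ≤ L * t * ‖v‖ ^ 2 := by
      filter_upwards [MeasureTheory.ae_restrict_mem measurableSet_uIoc] with t ht
      rw [Set.uIoc_of_le (by norm_num : (0:ℝ) ≤ 1)] at ht
      exact hbound t ⟨ht.1.le, ht.2⟩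
    have hIint : IntervalIntegrable (fun t => L * t * ‖v‖ ^ 2) MeasureTheory.volume 0 1 := by
      apply Continuous.intervalIntegrable; fun_prop
    have hval : (∫ t in (0:ℝ)..1, L * t * ‖v‖ ^ 2) = L / 2 * ‖v‖ ^ 2 := by
      have : (fun t : ℝ => L * t * ‖v‖ ^ 2) = fun t : ℝ => t * (L * ‖v‖ ^ 2) := by
        funext t; ring
      rw [this, intervalIntegral.integral_mul_const, integral_id]
      ring
    calc ‖∫ t in (0:ℝ)..1, ((inner ℝ (g (y + t • v)) v : ℝ) - inner ℝ (g y) v)‖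
        ≤ |∫ t in (0:ℝ)..1, L * t * ‖v‖ ^ 2| :=
          intervalIntegral.norm_integral_le_abs_of_norm_le hbd hIint
      _ = L / 2 * ‖v‖ ^ 2 := by
          rw [hval, abs_of_nonneg (by positivity)]
  have := key
  simp only [hψ] at this
  rw [Real.norm_eq_abs] at this
  have e : f (y + (1:ℝ) • v) - inner ℝ (g y) v * 1 - (f (y + (0:ℝ) • v) - inner ℝ (g y) v * 0)
      = f (y + v) - f y - inner ℝ (g y) v := by simp; ring
  rw [e] at this
  exact this

/-- Contraction of the maximization residual under a PL ascent step: if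
`f(x,·)` satisfies the μ-PL condition with `Φ(x) = max_y f(x,y)`, `∇ᵧf` is
`L₂`-Lipschitz in `y`, `0 < γ ≤ 1/(2L₂)` and `y⁺ = y + γ d`, then
`Φ(x) - f(x,y⁺) ≤ (1 - μγ/2)(Φ(x) - f(x,y)) - (γ/4)‖∇ᵧf(x,y)‖²
  + (γ/2)‖∇ᵧf(x,y) - d‖² - (γ/4)‖d‖²`. -/
theorem stmt_19
    {E F : Type*} [NormedAddCommGroup E] [InnerProductSpace ℝ E]
    [NormedAddCommGroup F] [InnerProductSpace ℝ F] [CompleteSpace F]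
    (f : E → F → ℝ) (Φ : E → ℝ) (gy : E → F → F)
    (μ L₂ : ℝ) (hμ : 0 < μ) (hL₂ : 0 < L₂)
    (hmax : ∀ x y, f x y ≤ Φ x)
    (hattain : ∀ x, ∃ y, f x y = Φ x)
    (hgrad : ∀ x y, HasGradientAt (fun y' => f x y') (gy x y) y)
    (hlip : ∀ x y₁ y₂, ‖gy x y₁ - gy x y₂‖ ≤ L₂ * ‖y₁ - y₂‖)
    (hPL : ∀ x y, μ * (Φ x - f x y) ≤ (1 / 2) * ‖gy x y‖ ^ 2)
    (x : E) (y d : F) (γ : ℝ) (hγ : 0 < γ) (hγ' : γ ≤ 1 / (2 * L₂)) :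
    Φ x - f x (y + γ • d) ≤
      (1 - μ * γ / 2) * (Φ x - f x y) - (γ / 4) * ‖gy x y‖ ^ 2 +
        (γ / 2) * ‖gy x y - d‖ ^ 2 - (γ / 4) * ‖d‖ ^ 2 := by
  have hd := descent_aux (fun y' => f x y') (fun y' => gy x y') L₂ hL₂.le
    (hgrad x) (hlip x) y (γ • d)
  have hip : (inner ℝ (gy x y) (γ • d) : ℝ) = γ * inner ℝ (gy x y) d :=
    real_inner_smul_right _ _ _
  have hns : ‖γ • d‖ ^ 2 = γ ^ 2 * ‖d‖ ^ 2 := by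
    rw [norm_smul, Real.norm_eq_abs, abs_of_pos hγ, mul_pow]
  rw [hip, hns] at hd
  have h1 : f x y + γ * inner ℝ (gy x y) d - L₂ / 2 * (γ ^ 2 * ‖d‖ ^ 2)
      ≤ f x (y + γ • d) := by
    have := (abs_le.mp hd).1
    linarith
  have h2 : ‖gy x y - d‖ ^ 2 = ‖gy x y‖ ^ 2 - 2 * inner ℝ (gy x y) d + ‖d‖ ^ 2 := by
    rw [← real_inner_self_eq_norm_sq, ← real_inner_self_eq_norm_sq, ← real_inner_self_eq_norm_sq,
      inner_sub_sub_self]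
    rw [real_inner_comm d (gy x y)]
    ring
  have h3 := hPL x y
  have h4 : L₂ * γ ≤ 1 / 2 := by
    rw [le_div_iff₀ (by positivity)] at hγ'
    nlinarith
  have hD : (0:ℝ) ≤ ‖d‖ ^ 2 := by positivity
  nlinarith [mul_le_mul_of_nonneg_left h3 hγ.le,
    mul_le_mul_of_nonneg_right (mul_le_mul_of_nonneg_right h4 hγ.le) hD]
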